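/- With a_n(k) = Σ_{d_1···d_n = k} d_1^0···d_n^{n-1} and a_n'(k) = Σ_{d_1···d_n = k} Π_{i=1}^n Σ_{g|d_i} μ(g)(d_i/g)^{i-1}, the identity a_n'(p^m) = Σ_{i=0}^m (-1)^i C(n,i) a_n(p^{m-i}) holds for every prime p and all m ≥ 0. -/

import Mathlib

open Finset ArithmeticFunction

/-- The set of n-tuples of positive integers with product k. -/
def tuples (n k : ℕ) : Finset (Fin n → ℕ) :=
  (Fintype.piFinset fun _ => k.divisors).filter fun d => ∏ i, d i = k

/-- a_n(k) = Σ_{d_1⋯d_n = k} d_1^0 d_2^1 ⋯ d_n^{n-1}. -/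
def an (n k : ℕ) : ℕ := ∑ d ∈ tuples n k, ∏ i : Fin n, d i ^ (i : ℕ)

/-- a_n'(k) = Σ_{d_1⋯d_n = k} Π_i Σ_{g ∣ d_i} μ(g) (d_i/g)^{i-1}. -/
def an' (n k : ℕ) : ℤ :=
  ∑ d ∈ tuples n k, ∏ i : Fin n,
    ∑ g ∈ (d i).divisors, moebius g * ((d i / g : ℕ) : ℤ) ^ (i : ℕ)

open scoped ArithmeticFunction.Moebius

/-- The value of a finite product of arithmetic functions as a sum over `finMulAntidiag`. -/
lemma prod_apply_finMulAntidiag {R : Type*} [CommSemiring R] :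
    ∀ (d : ℕ) (f : Fin d → ArithmeticFunction R) (k : ℕ),
    (∏ i, f i) k = ∑ a ∈ Nat.finMulAntidiag d k, ∏ i, f i (a i)
  | 0, f, k => by
    simp only [Finset.univ_eq_empty, Finset.prod_empty, one_apply]
    rcases eq_or_ne k 1 with rfl | hk
    · rw [Nat.finMulAntidiag_one]
      simp
    · rw [Nat.finMulAntidiag_zero_left hk]
      simp [hk]
  | (d+1), f, k => by
    rw [Fin.prod_univ_succ, mul_apply]
    have key : ∀ b, (∏ i : Fin d, f i.succ) b
        = ∑ a ∈ Nat.finMulAntidiag d b, ∏ i, f i.succ (a i) :=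
      prod_apply_finMulAntidiag d (fun i => f i.succ)
    simp only [key, Finset.mul_sum]
    rw [Finset.sum_sigma']
    refine Finset.sum_nbij' (fun x => Fin.cons x.1.1 x.2)
      (fun g => ⟨(g 0, ∏ i : Fin d, g i.succ), Fin.tail g⟩) ?_ ?_ ?_ ?_ ?_
    · rintro ⟨⟨a, b⟩, t⟩ hx
      simp only [Finset.mem_sigma, Nat.mem_divisorsAntidiagonal] at hx
      rw [Nat.mem_finMulAntidiag] at *
      refine ⟨?_, hx.1.2⟩
      rw [Fin.prod_univ_succ]
      simp only [Fin.cons_zero, Fin.cons_succ]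
      rw [hx.2.1, hx.1.1]
    · intro g hg
      rw [Nat.mem_finMulAntidiag] at hg
      simp only [Finset.mem_sigma, Nat.mem_divisorsAntidiagonal, Nat.mem_finMulAntidiag]
      have hprod : g 0 * ∏ i : Fin d, g i.succ = k := by
        rw [← hg.1, Fin.prod_univ_succ]
      refine ⟨⟨hprod, hg.2⟩, rfl, ?_⟩
      intro h
      exact hg.2 (by rw [← hprod, h, mul_zero])
    · rintro ⟨⟨a, b⟩, t⟩ hx
      simp only [Finset.mem_sigma, Nat.mem_divisorsAntidiagonal, Nat.mem_finMulAntidiag] at hx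
      ext
      · simp [Fin.cons_zero]
      · simp only [Fin.cons_succ]
        exact hx.2.1
      · simp [Fin.tail_cons]
    · intro g hg
      exact Fin.cons_self_tail g
    · rintro ⟨⟨a, b⟩, t⟩ hx
      simp [Fin.prod_univ_succ, Fin.cons_zero, Fin.cons_succ]

/-- μ^n at prime powers is given by signed binomial coefficients. -/
lemma moebius_pow_apply_prime_pow {p : ℕ} (hp : p.Prime) :
    ∀ n i : ℕ, ((μ : ArithmeticFunction ℤ) ^ n) (p ^ i) = (-1) ^ i * (n.choose i)
  | 0, i => by
    rcases Nat.eq_zero_or_pos i with rfl | hi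
    · simp
    · rw [pow_zero, one_apply_ne, Nat.choose_eq_zero_of_lt (by omega)]
      · simp
      · intro h
        have := Nat.le_of_dvd one_pos (h ▸ dvd_pow_self p hi.ne')
        have h2 := hp.two_le
        omega
  | (n+1), i => by
    rw [pow_succ, mul_comm, mul_apply, Nat.sum_divisorsAntidiagonal (f := fun a b =>
      (μ : ArithmeticFunction ℤ) a * ((μ : ArithmeticFunction ℤ) ^ n) b),
      Nat.sum_divisors_prime_pow hp]
    rcases Nat.eq_zero_or_pos i with rfl | hi
    · have h1 : ((μ:ArithmeticFunction ℤ) ^ n) 1 = 1 := by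
        have := moebius_pow_apply_prime_pow hp n 0
        simpa using this
      simp [h1]
    · have hterm : ∀ j ∈ Finset.range (i + 1),
          (μ : ArithmeticFunction ℤ) (p ^ j) * ((μ:ArithmeticFunction ℤ) ^ n) (p ^ i / p ^ j)
          = (if j = 0 then ((μ:ArithmeticFunction ℤ) ^ n) (p ^ i) else 0)
            + (if j = 1 then -((μ:ArithmeticFunction ℤ) ^ n) (p ^ (i-1)) else 0) := by
        intro j hj
        rw [Finset.mem_range] at hj
        rw [Nat.pow_div (by omega) hp.pos]
        rcases Nat.eq_zero_or_pos j with rfl | hj0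
        · simp
        · rcases eq_or_ne j 1 with rfl | hj1
          · rw [pow_one, moebius_apply_prime hp]; simp
          · rw [moebius_apply_prime_pow hp (by omega), if_neg hj1]
            simp [hj0.ne', hj1]
      rw [Finset.sum_congr rfl hterm, Finset.sum_add_distrib,
        Finset.sum_ite_eq' _ 0, Finset.sum_ite_eq' _ 1,
        if_pos (Finset.mem_range.mpr (by omega)), if_pos (Finset.mem_range.mpr (by omega)),
        moebius_pow_apply_prime_pow hp n i, moebius_pow_apply_prime_pow hp n (i-1)]
      obtain ⟨i', rfl⟩ := Nat.exists_eq_add_of_lt hi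
      simp only [Nat.zero_add, Nat.add_sub_cancel]
      rw [Nat.choose_succ_succ (n := n) (k := i')]
      push_cast
      ring

lemma tuples_eq {n k : ℕ} (hk : k ≠ 0) : tuples n k = Nat.finMulAntidiag n k :=
  (Nat.finMulAntidiag_eq_piFinset_divisors_filter dvd_rfl hk).symm

/-- The power arithmetic function, valued in ℤ. -/
noncomputable def Pz (i : ℕ) : ArithmeticFunction ℤ :=
  ((pow i : ArithmeticFunction ℕ) : ArithmeticFunction ℤ)

lemma Pz_apply {i d : ℕ} (hd : d ≠ 0) : Pz i d = (d : ℤ) ^ i := by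
  simp [Pz, natCoe_apply, pow_apply, hd]

lemma an_eq {n k : ℕ} (hk : k ≠ 0) :
    (an n k : ℤ) = (∏ i : Fin n, Pz (i : ℕ)) k := by
  rw [prod_apply_finMulAntidiag, ← tuples_eq hk, an]
  push_cast
  refine Finset.sum_congr rfl fun d hd => Finset.prod_congr rfl fun i _ => ?_
  rw [tuples_eq hk, Nat.mem_finMulAntidiag] at hd
  have hdi : d i ≠ 0 := by
    intro h
    exact hd.2 (by rw [← hd.1, Finset.prod_eq_zero (Finset.mem_univ i) h])
  rw [Pz_apply hdi]

lemma an'_eq {n k : ℕ} (hk : k ≠ 0) :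
    an' n k = (∏ i : Fin n, ((μ : ArithmeticFunction ℤ) * Pz (i : ℕ))) k := by
  rw [prod_apply_finMulAntidiag, ← tuples_eq hk, an']
  refine Finset.sum_congr rfl fun d hd => Finset.prod_congr rfl fun i _ => ?_
  rw [tuples_eq hk, Nat.mem_finMulAntidiag] at hd
  have hdi : d i ≠ 0 := by
    intro h
    exact hd.2 (by rw [← hd.1, Finset.prod_eq_zero (Finset.mem_univ i) h])
  rw [mul_apply, Nat.sum_divisorsAntidiagonal (f := fun a b =>
    (μ : ArithmeticFunction ℤ) a * Pz (i : ℕ) b)]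
  refine Finset.sum_congr rfl fun g hg => ?_
  rw [Nat.mem_divisors] at hg
  have : d i / g ≠ 0 := Nat.div_ne_zero_iff_of_dvd hg.1 |>.mpr ⟨hdi, by
    rintro rfl
    exact hdi (Nat.eq_zero_of_zero_dvd hg.1)⟩
  rw [Pz_apply this]

theorem an'_inclusion_exclusion (n : ℕ) (hn : 1 ≤ n) (p : ℕ) (hp : p.Prime) (m : ℕ) :
    an' n (p ^ m) =
      ∑ i ∈ Finset.range (m + 1), (-1 : ℤ) ^ i * (n.choose i) * (an n (p ^ (m - i)) : ℤ) := by
  have hpm : (p : ℕ) ^ m ≠ 0 := pow_ne_zero _ hp.pos.ne'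
  rw [an'_eq hpm, Finset.prod_mul_distrib, Finset.prod_const, Finset.card_univ,
    Fintype.card_fin, mul_apply, Nat.sum_divisorsAntidiagonal (f := fun a b =>
      ((μ : ArithmeticFunction ℤ) ^ n) a * (∏ i : Fin n, Pz (i : ℕ)) b),
    Nat.sum_divisors_prime_pow hp]
  refine Finset.sum_congr rfl fun i hi => ?_
  rw [Finset.mem_range] at hi
  rw [Nat.pow_div (by omega) hp.pos, moebius_pow_apply_prime_pow hp n i,
    an_eq (pow_ne_zero _ hp.pos.ne')]
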